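/- arXiv:2502.18896 — 4 statements merged into one kernel-verified Lean document; each statement's English description precedes it below -/
import Mathlib

section
/- Let μ be a Borel probability measure on ℝ^d and ν a finite Borel measure supported in {x : d(x,μ) ≤ δ}. If Re(s) > D, where D is the relative upper box dimension of μ with respect to ν, then the integral ∫ d(x,μ)^{s-d} dν(x) converges absolutely. -/
open MeasureTheory Filter Topology
open scoped ENNReal

def msupport {X : Type*} [TopologicalSpace X] [MeasurableSpace X] (μ : Measure X) : Set X :=
  {x | ∀ U ∈ nhds x, μ U ≠ 0}

noncomputable def distM {X : Type*} [MetricSpace X] [MeasurableSpace X] (x : X)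
    (μ : Measure X) : ℝ := Metric.infDist x (msupport μ)

/-- The relative upper `s`-dimensional Minkowski content of `μ` with respect to `ν`
in ambient dimension `d`. -/
noncomputable def upperContent {X : Type*} [MetricSpace X] [MeasurableSpace X]
    (d : ℕ) (μ ν : Measure X) (s : ℝ) : ℝ≥0∞ :=
  Filter.limsup (fun δ : ℝ => ENNReal.ofReal (δ ^ (s - d)) * ν {x | distM x μ ≤ δ})
    (𝓝[>] (0 : ℝ))

/-- The relative upper box (Minkowski) dimension of `μ` with respect to `ν`. -/
noncomputable def upperBoxDim {X : Type*} [MetricSpace X] [MeasurableSpace X]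
    (d : ℕ) (μ ν : Measure X) : ℝ :=
  sInf {s : ℝ | 0 ≤ s ∧ upperContent d μ ν s = 0}

/-- The complement of the measure-theoretic support is null (second countable space). -/
lemma null_compl_msupport {X : Type*} [TopologicalSpace X] [MeasurableSpace X]
    [SecondCountableTopology X] (ν : Measure X) : ν (msupport ν)ᶜ = 0 := by
  apply measure_null_of_locally_null
  intro x hx
  simp only [msupport, Set.mem_compl_iff, Set.mem_setOf_eq, not_forall] at hx
  obtain ⟨U, hU, hU0⟩ := hx
  exact ⟨U, mem_nhdsWithin_of_mem_nhds hU, not_not.mp hU0⟩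

/-- Exchanging natural powers with real powers of `1/2`. -/
lemma half_pow_rpow (β : ℝ) (n : ℕ) : (((2:ℝ)⁻¹) ^ n) ^ β = (((2:ℝ)⁻¹) ^ β) ^ n := by
  rw [← Real.rpow_natCast ((2:ℝ)⁻¹) n, ← Real.rpow_natCast (((2:ℝ)⁻¹) ^ β) n,
    ← Real.rpow_mul (by norm_num), ← Real.rpow_mul (by norm_num), mul_comm]

theorem zeta_integrable_above_upper_box_dim
    (d : ℕ) (μ ν : Measure (EuclideanSpace ℝ (Fin d)))
    [IsProbabilityMeasure μ] [IsFiniteMeasure ν]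
    (δ : ℝ) (hδ : 0 < δ)
    (hspt : msupport ν ⊆ {x | distM x μ ≤ δ})
    (s : ℂ) (hs : upperBoxDim d μ ν < s.re) :
    Integrable (fun x => (distM x μ) ^ (s.re - d)) ν := by
  set t : ℝ := s.re with ht
  set α : ℝ := t - d with hα
  -- measurability
  have hdist : Measurable fun x : EuclideanSpace ℝ (Fin d) => distM x μ :=
    (Metric.continuous_infDist_pt _).measurable
  have hdistnn : ∀ x : EuclideanSpace ℝ (Fin d), 0 ≤ distM x μ := fun x =>
    Metric.infDist_nonneg
  have hmeas : Measurable fun x : EuclideanSpace ℝ (Fin d) => (distM x μ) ^ α :=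
    hdist.pow measurable_const
  -- ν-a.e., distM x μ ≤ δ
  have hae : ∀ᵐ x ∂ν, distM x μ ≤ δ := by
    have h0 : ν {x | ¬ distM x μ ≤ δ} = 0 := by
      apply measure_mono_null _ (null_compl_msupport ν)
      intro x hx
      simp only [Set.mem_setOf_eq] at hx
      intro hxs
      exact hx (hspt hxs)
    exact h0
  rcases le_or_gt 0 α with hα0 | hα0
  · -- easy case : bounded integrand
    refine Integrable.mono' (integrable_const (δ ^ α)) hmeas.aestronglyMeasurable ?_
    filter_upwards [hae] with x hx
    rw [Real.norm_eq_abs, abs_of_nonneg (Real.rpow_nonneg (hdistnn x) _)]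
    exact Real.rpow_le_rpow (hdistnn x) hx hα0
  -- hard case : α < 0
  -- The set defining upperBoxDim is nonempty: d+1 belongs to it.
  have hSne : ((d:ℝ)+1) ∈ {s : ℝ | 0 ≤ s ∧ upperContent d μ ν s = 0} := by
    constructor
    · positivity
    · have htend : Tendsto
          (fun r : ℝ => ENNReal.ofReal (r ^ (((d:ℝ)+1) - d)) * ν {x | distM x μ ≤ r})
          (𝓝[>] (0:ℝ)) (𝓝 0) := by
        have h1 : Tendsto (fun r : ℝ => ENNReal.ofReal r * ν Set.univ)
            (𝓝[>] (0:ℝ)) (𝓝 0) := by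
          have : Tendsto (fun r : ℝ => ENNReal.ofReal r) (𝓝[>] (0:ℝ)) (𝓝 0) := by
            have h := (ENNReal.continuous_ofReal.tendsto 0).mono_left
              (nhdsWithin_le_nhds (s := Set.Ioi (0:ℝ)))
            simpa using h
          have := ENNReal.Tendsto.mul_const this (Or.inr (measure_ne_top ν Set.univ))
          simpa using this
        apply tendsto_of_tendsto_of_tendsto_of_le_of_le tendsto_const_nhds h1
        · intro r; exact zero_le
        · intro r
          show ENNReal.ofReal (r ^ (((d:ℝ)+1) - (d:ℝ))) * ν {x | distM x μ ≤ r} ≤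
            ENNReal.ofReal r * ν Set.univ
          rw [show ((d:ℝ)+1) - (d:ℝ) = 1 by ring, Real.rpow_one]
          exact mul_le_mul_right (measure_mono (Set.subset_univ _)) _
      exact htend.limsup_eq
  have hbdd : BddBelow {s : ℝ | 0 ≤ s ∧ upperContent d μ ν s = 0} :=
    ⟨0, fun x hx => hx.1⟩
  rw [upperBoxDim] at hs
  obtain ⟨s₀, ⟨hs₀0, hcont⟩, hs₀t⟩ := (csInf_lt_iff hbdd ⟨_, hSne⟩).mp hs
  -- from vanishing content, get the measure bound for small radii
  have hev : ∀ᶠ r in 𝓝[>] (0:ℝ),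
      ENNReal.ofReal (r ^ (s₀ - d)) * ν {x | distM x μ ≤ r} < 1 := by
    apply eventually_lt_of_limsup_lt
    · rw [show Filter.limsup (fun r : ℝ => ENNReal.ofReal (r ^ (s₀ - d)) * ν {x | distM x μ ≤ r})
        (𝓝[>] (0:ℝ)) = upperContent d μ ν s₀ from rfl, hcont]
      exact zero_lt_one
    · exact Filter.isBoundedUnder_of ⟨⊤, fun _ => le_top⟩
  obtain ⟨δ₀, hδ₀, hsub⟩ := mem_nhdsGT_iff_exists_Ioc_subset.mp hev
  rw [Set.mem_Ioi] at hδ₀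
  have hbound : ∀ r : ℝ, 0 < r → r ≤ δ₀ →
      ν {x | distM x μ ≤ r} ≤ ENNReal.ofReal (r ^ ((d:ℝ) - s₀)) := by
    intro r hr0 hrδ₀
    have h1 : ENNReal.ofReal (r ^ (s₀ - d)) * ν {x | distM x μ ≤ r} < 1 :=
      hsub ⟨hr0, hrδ₀⟩
    set a : ℝ≥0∞ := ENNReal.ofReal (r ^ (s₀ - d)) with ha
    have hrp : (0:ℝ) < r ^ (s₀ - d) := Real.rpow_pos_of_pos hr0 _
    have ha0 : a ≠ 0 := by
      simp only [ha, ne_eq, ENNReal.ofReal_eq_zero, not_le]; exact hrp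
    have haT : a ≠ ⊤ := ENNReal.ofReal_ne_top
    calc ν {x | distM x μ ≤ r} = a⁻¹ * (a * ν {x | distM x μ ≤ r}) := by
          rw [← mul_assoc, ENNReal.inv_mul_cancel ha0 haT, one_mul]
      _ ≤ a⁻¹ * 1 := mul_le_mul_right h1.le _
      _ = a⁻¹ := mul_one _
      _ = ENNReal.ofReal (r ^ ((d:ℝ) - s₀)) := by
          rw [ha, ← ENNReal.ofReal_inv_of_pos hrp, ← Real.rpow_neg hr0.le, neg_sub]
  -- set up the dyadic decomposition
  set r0 : ℝ := min δ₀ δ with hr0def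
  have hr0pos : 0 < r0 := lt_min hδ₀ hδ
  set q : ℝ := (2:ℝ)⁻¹ with hqdef
  have hq0 : (0:ℝ) < q := by norm_num
  have hq1 : q < 1 := by norm_num
  set rn : ℕ → ℝ := fun n => r0 * q ^ n with hrndef
  have hrnpos : ∀ n, 0 < rn n := fun n => mul_pos hr0pos (pow_pos hq0 n)
  have hrnle : ∀ n, rn n ≤ δ₀ := by
    intro n
    calc rn n ≤ r0 * 1 := by
          apply mul_le_mul_of_nonneg_left _ hr0pos.le
          exact pow_le_one₀ hq0.le hq1.le
      _ = r0 := mul_one _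
      _ ≤ δ₀ := min_le_left _ _
  set S0 : Set (EuclideanSpace ℝ (Fin d)) := {x | distM x μ ≤ 0} with hS0def
  set B : Set (EuclideanSpace ℝ (Fin d)) := {x | r0 < distM x μ} with hBdef
  set A : ℕ → Set (EuclideanSpace ℝ (Fin d)) :=
    fun n => {x | rn (n+1) < distM x μ ∧ distM x μ ≤ rn n} with hAdef
  have hS0meas : MeasurableSet S0 := hdist measurableSet_Iic
  have hBmeas : MeasurableSet B := hdist measurableSet_Ioi
  have hAmeas : ∀ n, MeasurableSet (A n) := fun n =>
    (hdist measurableSet_Ioi).inter (hdist measurableSet_Iic)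
  have hcover : (Set.univ : Set (EuclideanSpace ℝ (Fin d))) ⊆ S0 ∪ B ∪ ⋃ n, A n := by
    intro x _
    rcases le_or_gt (distM x μ) 0 with h0 | h0
    · exact Or.inl (Or.inl h0)
    rcases lt_or_ge r0 (distM x μ) with hB | hB
    · exact Or.inl (Or.inr hB)
    · refine Or.inr ?_
      have hP : ∃ n : ℕ, rn n < distM x μ := by
        obtain ⟨n, hn⟩ := exists_pow_lt_of_lt_one (div_pos h0 hr0pos) hq1
        exact ⟨n, by
          rw [hrndef]
          calc r0 * q ^ n < r0 * (distM x μ / r0) :=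
                mul_lt_mul_of_pos_left hn hr0pos
            _ = distM x μ := by field_simp⟩
      classical
      set n := Nat.find hP with hn
      have hn0 : n ≠ 0 := by
        intro h
        have := Nat.find_spec hP
        rw [← hn, h] at this
        simp only [hrndef, pow_zero, mul_one] at this
        exact absurd hB (not_le.mpr this)
      obtain ⟨m, hm⟩ := Nat.exists_eq_succ_of_ne_zero hn0
      have h1 : rn n < distM x μ := by rw [hn]; exact Nat.find_spec hP
      have h2 : distM x μ ≤ rn m := by
        have := Nat.find_min hP (m := m) (by omega)
        exact not_lt.mp this
      refine Set.mem_iUnion.mpr ⟨m, ?_, h2⟩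
      have hm' : n = m + 1 := hm
      rw [hm'] at h1
      exact h1
  -- the nonnegative integrand in ℝ≥0∞
  set F : EuclideanSpace ℝ (Fin d) → ℝ≥0∞ :=
    fun x => ENNReal.ofReal ((distM x μ) ^ α) with hFdef
  -- bounds on the pieces
  have hS0int : ∫⁻ x in S0, F x ∂ν = 0 := by
    have : ∀ x ∈ S0, F x = 0 := by
      intro x hx
      have hx0 : distM x μ = 0 := le_antisymm hx (hdistnn x)
      simp [hFdef, hx0, Real.zero_rpow (ne_of_lt hα0)]
    calc ∫⁻ x in S0, F x ∂ν = ∫⁻ _ in S0, 0 ∂ν :=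
          setLIntegral_congr_fun hS0meas this
      _ = 0 := by simp
  have hBint : ∫⁻ x in B, F x ∂ν ≤ ENNReal.ofReal (r0 ^ α) * ν Set.univ := by
    calc ∫⁻ x in B, F x ∂ν ≤ ∫⁻ _ in B, ENNReal.ofReal (r0 ^ α) ∂ν := by
          apply setLIntegral_mono' hBmeas
          intro x hx
          exact ENNReal.ofReal_le_ofReal
            (Real.rpow_le_rpow_of_nonpos hr0pos hx.le hα0.le)
      _ = ENNReal.ofReal (r0 ^ α) * ν B := setLIntegral_const _ _
      _ ≤ ENNReal.ofReal (r0 ^ α) * ν Set.univ :=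
          mul_le_mul_right (measure_mono (Set.subset_univ _)) _
  have hAint : ∀ n, ∫⁻ x in A n, F x ∂ν ≤
      ENNReal.ofReal ((rn (n+1)) ^ α * (rn n) ^ ((d:ℝ) - s₀)) := by
    intro n
    calc ∫⁻ x in A n, F x ∂ν ≤ ∫⁻ _ in A n, ENNReal.ofReal ((rn (n+1)) ^ α) ∂ν := by
          apply setLIntegral_mono' (hAmeas n)
          intro x hx
          exact ENNReal.ofReal_le_ofReal
            (Real.rpow_le_rpow_of_nonpos (hrnpos (n+1)) hx.1.le hα0.le)
      _ = ENNReal.ofReal ((rn (n+1)) ^ α) * ν (A n) := setLIntegral_const _ _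
      _ ≤ ENNReal.ofReal ((rn (n+1)) ^ α) * ENNReal.ofReal ((rn n) ^ ((d:ℝ) - s₀)) := by
          apply mul_le_mul_right
          refine le_trans (measure_mono ?_) (hbound (rn n) (hrnpos n) (hrnle n))
          intro x hx; exact hx.2
      _ = ENNReal.ofReal ((rn (n+1)) ^ α * (rn n) ^ ((d:ℝ) - s₀)) := by
          rw [ENNReal.ofReal_mul (Real.rpow_nonneg (hrnpos (n+1)).le _)]
  -- summability of the geometric-type series
  set w : ℕ → ℝ := fun n => (rn (n+1)) ^ α * (rn n) ^ ((d:ℝ) - s₀) with hwdef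
  have hwnn : ∀ n, 0 ≤ w n := fun n =>
    mul_nonneg (Real.rpow_nonneg (hrnpos (n+1)).le _) (Real.rpow_nonneg (hrnpos n).le _)
  set ρ : ℝ := q ^ (t - s₀) with hρdef
  have hρ0 : 0 ≤ ρ := Real.rpow_nonneg hq0.le _
  have hρ1 : ρ < 1 := Real.rpow_lt_one hq0.le hq1 (by linarith)
  have hwval : ∀ n, w n = (r0 ^ α * q ^ α * r0 ^ ((d:ℝ) - s₀)) * ρ ^ n := by
    intro n
    show (r0 * q ^ (n+1)) ^ α * (r0 * q ^ n) ^ ((d:ℝ) - s₀) =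
      (r0 ^ α * q ^ α * r0 ^ ((d:ℝ) - s₀)) * (q ^ (t - s₀)) ^ n
    have hqsplit : q ^ (t - s₀) = q ^ α * q ^ ((d:ℝ) - s₀) := by
      rw [← Real.rpow_add hq0]
      congr 1
      rw [hα]; ring
    rw [pow_succ,
        Real.mul_rpow hr0pos.le (mul_nonneg (pow_nonneg hq0.le n) hq0.le),
        Real.mul_rpow (pow_nonneg hq0.le n) hq0.le,
        Real.mul_rpow hr0pos.le (pow_nonneg hq0.le n),
        half_pow_rpow α n, half_pow_rpow ((d:ℝ) - s₀) n, hqsplit, mul_pow]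
    ring
  have hwsum : Summable w := by
    have := (summable_geometric_of_lt_one hρ0 hρ1).mul_left
      (r0 ^ α * q ^ α * r0 ^ ((d:ℝ) - s₀))
    exact this.congr fun n => (hwval n).symm
  have htsum : (∑' n, ENNReal.ofReal (w n)) ≠ ⊤ := by
    rw [← ENNReal.ofReal_tsum_of_nonneg hwnn hwsum]
    exact ENNReal.ofReal_ne_top
  -- assemble
  have hfin : ∫⁻ x, F x ∂ν < ⊤ := by
    calc ∫⁻ x, F x ∂ν = ∫⁻ x in Set.univ, F x ∂ν := (setLIntegral_univ _).symm
      _ ≤ ∫⁻ x in S0 ∪ B ∪ ⋃ n, A n, F x ∂ν := lintegral_mono_set hcover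
      _ ≤ (∫⁻ x in S0 ∪ B, F x ∂ν) + ∫⁻ x in ⋃ n, A n, F x ∂ν :=
          lintegral_union_le _ _ _
      _ ≤ ((∫⁻ x in S0, F x ∂ν) + ∫⁻ x in B, F x ∂ν) + ∑' n, ∫⁻ x in A n, F x ∂ν :=
          add_le_add (lintegral_union_le _ _ _) (lintegral_iUnion_le _ _)
      _ ≤ (0 + ENNReal.ofReal (r0 ^ α) * ν Set.univ) + ∑' n, ENNReal.ofReal (w n) :=
          add_le_add (add_le_add hS0int.le hBint) (ENNReal.tsum_le_tsum hAint)
      _ < ⊤ := by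
          rw [zero_add]
          apply ENNReal.add_lt_top.mpr
          exact ⟨ENNReal.mul_lt_top ENNReal.ofReal_lt_top (measure_lt_top ν _),
            lt_top_iff_ne_top.mpr htsum⟩
  refine ⟨hmeas.aestronglyMeasurable, ?_⟩
  rw [hasFiniteIntegral_iff_norm]
  have : ∀ x, ENNReal.ofReal ‖(distM x μ) ^ α‖ = F x := by
    intro x
    rw [Real.norm_eq_abs, abs_of_nonneg (Real.rpow_nonneg (hdistnn x) _)]
  simpa only [this] using hfin
end

section
/- Let μ be a Borel probability measure on ℝ^d with relative box dimension D := dim_B(μ, ν) with respect to a finite Borel measure ν supported in a tubular neighborhood of spt(μ), where D < d. If the relative lower D-dimensional Minkowski content M^D_*(μ, ν) is strictly positive, then the relative distance zeta function ζ_μ(s, ν) = ∫ d(x,μ)^{s-d} dν(x) tends to +∞ as real s → D+. -/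
open MeasureTheory Filter Topology
open scoped ENNReal

noncomputable def lowerContent {X : Type*} [MetricSpace X] [MeasurableSpace X]
    (d : ℕ) (μ ν : Measure X) (s : ℝ) : ℝ≥0∞ :=
  Filter.liminf (fun δ : ℝ => ENNReal.ofReal (δ ^ (s - d)) * ν {x | distM x μ ≤ δ})
    (𝓝[>] (0 : ℝ))

noncomputable def lowerBoxDim {X : Type*} [MetricSpace X] [MeasurableSpace X]
    (d : ℕ) (μ ν : Measure X) : ℝ :=
  sInf {s : ℝ | 0 ≤ s ∧ lowerContent d μ ν s = 0}

open Set

section Aux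
variable {X : Type*} [MetricSpace X] [MeasurableSpace X]

lemma Ioo01_mem : Set.Ioo (0:ℝ) 1 ∈ 𝓝[>] (0:ℝ) :=
  Ioo_mem_nhdsGT_of_mem ⟨le_refl _, one_pos⟩

lemma distM_nonneg (x : X) (μ : Measure X) : 0 ≤ distM x μ := Metric.infDist_nonneg

lemma distM_continuous (μ : Measure X) : Continuous fun x : X => distM x μ :=
  Metric.continuous_infDist_pt _

lemma distM_rpow_measurable [OpensMeasurableSpace X] (μ : Measure X) (c : ℝ) :
    Measurable fun x : X => distM x μ ^ c := by
  have hcont := distM_continuous (X := X) μ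
  have heq : (fun x : X => distM x μ ^ c)
      = fun x => if distM x μ = 0 then (if c = 0 then 1 else 0)
          else Real.exp (Real.log (distM x μ) * c) := by
    funext x; rw [Real.rpow_def_of_nonneg (distM_nonneg x μ)]
  rw [heq]
  exact Measurable.ite (hcont.measurable (measurableSet_singleton 0)) measurable_const
    ((Real.measurable_log.comp hcont.measurable).mul_const c).exp

lemma upperContent_anti (d : ℕ) (μ ν : Measure X) {s s' : ℝ} (h : s ≤ s') :
    upperContent d μ ν s' ≤ upperContent d μ ν s := by
  refine Filter.limsup_le_limsup ?_
  filter_upwards [Ioo01_mem] with r hr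
  exact mul_le_mul_left
    (ENNReal.ofReal_le_ofReal
      (Real.rpow_le_rpow_of_exponent_ge hr.1 hr.2.le (by linarith))) _

lemma upperContent_succ_eq_zero (d : ℕ) (μ ν : Measure X) [IsFiniteMeasure ν] :
    upperContent d μ ν (d + 1) = 0 := by
  have hmaj : ∀ᶠ r : ℝ in 𝓝[>] (0:ℝ),
      ENNReal.ofReal (r ^ ((d:ℝ) + 1 - d)) * ν {x | distM x μ ≤ r}
        ≤ ENNReal.ofReal r * ν Set.univ := by
    filter_upwards [self_mem_nhdsWithin] with r hr
    have h1 : ((d:ℝ) + 1 - d) = 1 := by ring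
    rw [h1, Real.rpow_one]
    exact mul_le_mul_right (measure_mono (subset_univ _)) _
  have htend : Tendsto (fun r : ℝ => ENNReal.ofReal r * ν Set.univ) (𝓝[>] (0:ℝ)) (𝓝 0) := by
    have h1 : Tendsto (fun r : ℝ => ENNReal.ofReal r) (𝓝[>] (0:ℝ)) (𝓝 0) := by
      have := (ENNReal.continuous_ofReal.tendsto 0).mono_left
        (nhdsWithin_le_nhds (s := Set.Ioi (0:ℝ)))
      simpa using this
    have := ENNReal.Tendsto.mul_const h1 (Or.inr (measure_ne_top ν Set.univ))
    simpa using this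
  refine le_antisymm ?_ (zero_le)
  calc upperContent d μ ν (d + 1)
      ≤ Filter.limsup (fun r : ℝ => ENNReal.ofReal r * ν Set.univ) (𝓝[>] (0:ℝ)) :=
        Filter.limsup_le_limsup hmaj
    _ = 0 := htend.limsup_eq

lemma upperContent_eq_zero_of_gt (d : ℕ) (μ ν : Measure X) [IsFiniteMeasure ν] {s : ℝ}
    (hs : upperBoxDim d μ ν < s) : upperContent d μ ν s = 0 := by
  have hne : {t : ℝ | 0 ≤ t ∧ upperContent d μ ν t = 0}.Nonempty :=
    ⟨(d:ℝ) + 1, by positivity, upperContent_succ_eq_zero d μ ν⟩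
  have hbdd : BddBelow {t : ℝ | 0 ≤ t ∧ upperContent d μ ν t = 0} := ⟨0, fun t ht => ht.1⟩
  obtain ⟨t, ht, hts⟩ := (csInf_lt_iff hbdd hne).mp hs
  exact le_antisymm (le_trans (upperContent_anti d μ ν hts.le) ht.2.le) (zero_le)

lemma distM_null (d : ℕ) (μ ν : Measure X) [IsFiniteMeasure ν] {D : ℝ}
    (hD' : upperBoxDim d μ ν = D) (hDd : D < d) : ν {x | distM x μ = 0} = 0 := by
  by_contra hm
  have hmpos : 0 < ν {x | distM x μ = 0} := pos_iff_ne_zero.mpr hm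
  have h0 : upperContent d μ ν ((D + d)/2) = 0 :=
    upperContent_eq_zero_of_gt d μ ν (by rw [hD']; linarith)
  have hev := Filter.eventually_lt_of_limsup_lt
    (show upperContent d μ ν ((D + d)/2) < ν {x | distM x μ = 0} by rw [h0]; exact hmpos)
  have hev2 : ∀ᶠ r : ℝ in 𝓝[>] (0:ℝ), r ∈ Set.Ioo (0:ℝ) 1 := Ioo01_mem
  obtain ⟨r, hlt, hr0, hr1⟩ := (hev.and hev2).exists
  refine absurd hlt (not_lt.mpr ?_)
  have h1 : (1:ℝ≥0∞) ≤ ENNReal.ofReal (r ^ ((D + d)/2 - d)) := by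
    rw [show (1:ℝ≥0∞) = ENNReal.ofReal 1 by simp]
    exact ENNReal.ofReal_le_ofReal
      (Real.one_le_rpow_of_pos_of_le_one_of_nonpos hr0 hr1.le (by linarith))
  calc ν {x | distM x μ = 0} ≤ ν {x | distM x μ ≤ r} :=
        measure_mono (fun x hx => le_of_eq_of_le hx hr0.le)
    _ ≤ ENNReal.ofReal (r ^ ((D + d)/2 - d)) * ν {x | distM x μ ≤ r} :=
        le_mul_of_one_le_left (zero_le) h1

end Aux

theorem zeta_tendsto_atTop_at_box_dim
    (d : ℕ) (μ ν : Measure (EuclideanSpace ℝ (Fin d)))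
    [IsProbabilityMeasure μ] [IsFiniteMeasure ν]
    (δ : ℝ) (hδ : 0 < δ)
    (hspt : msupport ν ⊆ {x | distM x μ ≤ δ})
    (D : ℝ) (hD : lowerBoxDim d μ ν = D) (hD' : upperBoxDim d μ ν = D)
    (hDd : D < d)
    (hpos : 0 < lowerContent d μ ν D) :
    Tendsto (fun s : ℝ => ∫ x, (distM x μ) ^ (s - d) ∂ν) (𝓝[>] D) atTop := by
  have hd0 : (0:ℝ) < (d:ℝ) - D := by linarith
  have hν0 : ν {x | distM x μ = 0} = 0 := distM_null d μ ν hD' hDd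
  -- extract lower content constant
  set L := lowerContent d μ ν D with hL
  have hLpos : 0 < min L 1 := lt_min hpos zero_lt_one
  have hLfin : min L 1 ≠ ⊤ := ((min_le_right _ _).trans_lt ENNReal.one_lt_top).ne
  set cE := min L 1 / 2 with hcEdef
  have hcElt : cE < L :=
    lt_of_lt_of_le (ENNReal.half_lt_self hLpos.ne' hLfin) (min_le_left _ _)
  have hcEfin : cE ≠ ⊤ := by
    refine ne_top_of_le_ne_top hLfin ?_
    exact le_trans (ENNReal.half_le_self) le_rfl
  have hcEpos : 0 < cE := ENNReal.half_pos hLpos.ne'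
  set c := cE.toReal with hcdef
  have hcpos : 0 < c := ENNReal.toReal_pos hcEpos.ne' hcEfin
  have hcE' : ENNReal.ofReal c = cE := ENNReal.ofReal_toReal hcEfin
  have hev : ∀ᶠ r : ℝ in 𝓝[>] (0:ℝ),
      cE < ENNReal.ofReal (r ^ (D - d)) * ν {x | distM x μ ≤ r} :=
    Filter.eventually_lt_of_lt_liminf hcElt
  obtain ⟨u, hu, husub⟩ := mem_nhdsGT_iff_exists_Ioo_subset.mp hev
  set δ₀ := min u 1 / 2 with hδ₀def
  have humin : 0 < min u 1 := lt_min hu one_pos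
  have hδ₀pos : 0 < δ₀ := by rw [hδ₀def]; linarith
  have hδ₀lt1 : δ₀ < 1 := by
    have := min_le_right u 1; rw [hδ₀def]; linarith
  have hδ₀u : δ₀ < u := by
    have := min_le_left u 1; rw [hδ₀def]; linarith
  have hlow : ∀ r : ℝ, 0 < r → r ≤ δ₀ →
      ENNReal.ofReal (c * r ^ ((d:ℝ) - D)) ≤ ν {x | distM x μ ≤ r} := by
    intro r hr hrδ
    have hkey := husub ⟨hr, lt_of_le_of_lt hrδ hδ₀u⟩
    have hrpow : ENNReal.ofReal (r ^ ((d:ℝ) - D)) * ENNReal.ofReal (r ^ (D - (d:ℝ))) = 1 := by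
      rw [← ENNReal.ofReal_mul (by positivity), ← Real.rpow_add hr]
      norm_num
    calc ENNReal.ofReal (c * r ^ ((d:ℝ) - D))
        = ENNReal.ofReal (r ^ ((d:ℝ) - D)) * cE := by
          rw [ENNReal.ofReal_mul hcpos.le, hcE', mul_comm]
      _ ≤ ENNReal.ofReal (r ^ ((d:ℝ) - D)) *
            (ENNReal.ofReal (r ^ (D - (d:ℝ))) * ν {x | distM x μ ≤ r}) :=
          mul_le_mul_right hkey.le _
      _ = (ENNReal.ofReal (r ^ ((d:ℝ) - D)) * ENNReal.ofReal (r ^ (D - (d:ℝ)))) *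
            ν {x | distM x μ ≤ r} := (mul_assoc _ _ _).symm
      _ = ν {x | distM x μ ≤ r} := by rw [hrpow, one_mul]
  -- main constants
  set T := δ₀ ^ (D - (d:ℝ)) with hTdef
  have hTpos : 0 < T := Real.rpow_pos_of_pos hδ₀pos _
  set K := c * 2 ^ (D - (d:ℝ)) with hKdef
  have hKpos : 0 < K := by
    have : (0:ℝ) < 2 ^ (D - (d:ℝ)) := Real.rpow_pos_of_pos (by norm_num) _
    positivity
  set p : ℝ → ℝ := fun s => ((d:ℝ) - D) / ((d:ℝ) - s) with hpdef
  set g : ℝ → ℝ := fun s => K * T ^ (1 - p s) * (p s - 1)⁻¹ with hgdef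
  -- the key pointwise bound
  have key : ∀ s : ℝ, D < s → s < d → g s ≤ ∫ x, (distM x μ) ^ (s - (d:ℝ)) ∂ν := by
    intro s hs hsd
    have hsd' : s - (d:ℝ) < 0 := by linarith
    have hsdne : s - (d:ℝ) ≠ 0 := hsd'.ne
    have hinvneg : (s - (d:ℝ))⁻¹ < 0 := inv_lt_zero.mpr hsd'
    have hppos : 0 < p s - 1 := by
      rw [hpdef]
      simp only
      rw [sub_pos, lt_div_iff₀ (by linarith : (0:ℝ) < (d:ℝ) - s)]
      linarith
    set f : EuclideanSpace ℝ (Fin d) → ℝ := fun x => distM x μ ^ (s - (d:ℝ)) with hfdef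
    have f_nn : ∀ x, 0 ≤ f x := fun x => Real.rpow_nonneg (distM_nonneg x μ) _
    have f_mble : Measurable f := distM_rpow_measurable μ _
    have layer : ∫⁻ x, ENNReal.ofReal (f x) ∂ν = ∫⁻ t in Ioi (0:ℝ), ν {x | t < f x} :=
      lintegral_eq_lintegral_meas_lt ν (ae_of_all _ f_nn) f_mble.aemeasurable
    -- upper estimate at scale s₁
    set s₁ := (D + s)/2 with hs₁def
    have hDs₁ : D < s₁ := by rw [hs₁def]; linarith
    have hs₁s : s₁ < s := by rw [hs₁def]; linarith
    have h0 : upperContent d μ ν s₁ = 0 :=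
      upperContent_eq_zero_of_gt d μ ν (by rw [hD']; exact hDs₁)
    have hev1 : ∀ᶠ r : ℝ in 𝓝[>] (0:ℝ),
        ENNReal.ofReal (r ^ (s₁ - d)) * ν {x | distM x μ ≤ r} < 1 :=
      Filter.eventually_lt_of_limsup_lt (by rw [show Filter.limsup _ _ = upperContent d μ ν s₁ from rfl, h0]; exact zero_lt_one)
    obtain ⟨u₁, hu₁, hu₁sub⟩ := mem_nhdsGT_iff_exists_Ioo_subset.mp hev1
    set δ₁ := min u₁ 1 / 2 with hδ₁def
    have hu₁min : 0 < min u₁ 1 := lt_min hu₁ one_pos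
    have hδ₁pos : 0 < δ₁ := by rw [hδ₁def]; linarith
    have hδ₁u : δ₁ < u₁ := by
      have := min_le_left u₁ 1; rw [hδ₁def]; linarith
    have hup : ∀ r : ℝ, 0 < r → r ≤ δ₁ →
        ν {x | distM x μ ≤ r} ≤ ENNReal.ofReal (r ^ ((d:ℝ) - s₁)) := by
      intro r hr hrδ
      have hkey := hu₁sub ⟨hr, lt_of_le_of_lt hrδ hδ₁u⟩
      have hrpow : ENNReal.ofReal (r ^ ((d:ℝ) - s₁)) * ENNReal.ofReal (r ^ (s₁ - (d:ℝ))) = 1 := by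
        rw [← ENNReal.ofReal_mul (by positivity), ← Real.rpow_add hr]
        norm_num
      calc ν {x | distM x μ ≤ r}
          = (ENNReal.ofReal (r ^ ((d:ℝ) - s₁)) * ENNReal.ofReal (r ^ (s₁ - (d:ℝ)))) *
              ν {x | distM x μ ≤ r} := by rw [hrpow, one_mul]
        _ = ENNReal.ofReal (r ^ ((d:ℝ) - s₁)) *
              (ENNReal.ofReal (r ^ (s₁ - (d:ℝ))) * ν {x | distM x μ ≤ r}) := mul_assoc _ _ _
        _ ≤ ENNReal.ofReal (r ^ ((d:ℝ) - s₁)) * 1 := mul_le_mul_right hkey.le _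
        _ = ENNReal.ofReal (r ^ ((d:ℝ) - s₁)) := mul_one _
    set T₁ := δ₁ ^ (s - (d:ℝ)) with hT₁def
    have hT₁pos : 0 < T₁ := Real.rpow_pos_of_pos hδ₁pos _
    set q := ((d:ℝ) - s₁) * (s - (d:ℝ))⁻¹ with hqdef
    have hqlt : q < -1 := by
      rw [hqdef, ← div_eq_mul_inv, div_lt_iff_of_neg hsd']
      linarith
    have hincl : ∀ t : ℝ, 0 < t →
        {x | t < f x} ⊆ {x | distM x μ ≤ t ^ (s - (d:ℝ))⁻¹} := by
      intro t ht x hx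
      simp only [mem_setOf_eq] at hx ⊢
      have hdx : 0 < distM x μ := by
        rcases (distM_nonneg x μ).lt_or_eq with h | h
        · exact h
        · exfalso
          rw [hfdef] at hx
          simp only at hx
          rw [← h, Real.zero_rpow hsdne] at hx
          exact absurd hx (not_lt.mpr ht.le)
      have h2 := Real.rpow_lt_rpow_of_neg ht hx hinvneg
      rw [← Real.rpow_mul (distM_nonneg x μ), mul_inv_cancel₀ hsdne, Real.rpow_one] at h2
      exact h2.le
    have hanti : ∀ t : ℝ, T₁ < t → t ^ (s - (d:ℝ))⁻¹ < δ₁ := by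
      intro t ht
      have h2 := Real.rpow_lt_rpow_of_neg hT₁pos ht hinvneg
      rwa [hT₁def, ← Real.rpow_mul hδ₁pos.le, mul_inv_cancel₀ hsdne, Real.rpow_one] at h2
    have hfin : ∫⁻ x, ENNReal.ofReal (f x) ∂ν < ⊤ := by
      rw [layer, ← Ioc_union_Ioi_eq_Ioi hT₁pos.le,
        lintegral_union measurableSet_Ioi (Ioc_disjoint_Ioi le_rfl)]
      refine ENNReal.add_lt_top.mpr ⟨?_, ?_⟩
      · calc ∫⁻ t in Ioc (0:ℝ) T₁, ν {x | t < f x}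
            ≤ ∫⁻ _ in Ioc (0:ℝ) T₁, ν Set.univ :=
              lintegral_mono fun t => measure_mono (subset_univ _)
          _ = ν Set.univ * volume (Ioc (0:ℝ) T₁) := setLIntegral_const _ _
          _ < ⊤ := ENNReal.mul_lt_top (measure_lt_top ν _) (by simp [Real.volume_Ioc])
      · calc ∫⁻ t in Ioi T₁, ν {x | t < f x}
            ≤ ∫⁻ t in Ioi T₁, ENNReal.ofReal (t ^ q) := by
              refine setLIntegral_mono' measurableSet_Ioi fun t ht => ?_
              have ht0 : 0 < t := lt_trans hT₁pos ht
              calc ν {x | t < f x}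
                  ≤ ν {x | distM x μ ≤ t ^ (s - (d:ℝ))⁻¹} := measure_mono (hincl t ht0)
                _ ≤ ENNReal.ofReal ((t ^ (s - (d:ℝ))⁻¹) ^ ((d:ℝ) - s₁)) :=
                    hup _ (Real.rpow_pos_of_pos ht0 _) (hanti t ht).le
                _ = ENNReal.ofReal (t ^ q) := by
                    rw [← Real.rpow_mul ht0.le, hqdef, mul_comm]
          _ ≤ ∫⁻ t in Ioi T₁, (‖t ^ q‖₊ : ℝ≥0∞) :=
              lintegral_mono fun t => Real.ofReal_le_enorm _
          _ < ⊤ := (integrableOn_Ioi_rpow_of_lt hqlt hT₁pos).2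
    have hint : Integrable f ν :=
      ⟨f_mble.aestronglyMeasurable, (hasFiniteIntegral_iff_ofReal (ae_of_all _ f_nn)).mpr hfin⟩
    have hieq : ∫ x, f x ∂ν = (∫⁻ x, ENNReal.ofReal (f x) ∂ν).toReal :=
      integral_eq_lintegral_of_nonneg_ae (ae_of_all _ f_nn) f_mble.aestronglyMeasurable
    -- lower estimate
    have hTge : δ₀ ^ (s - (d:ℝ)) ≤ T :=
      Real.rpow_le_rpow_of_exponent_ge hδ₀pos hδ₀lt1.le (by linarith)
    have hlb : ∀ t : ℝ, T < t → ENNReal.ofReal (K * t ^ (-(p s))) ≤ ν {x | t < f x} := by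
      intro t ht
      have ht0 : 0 < t := lt_trans hTpos ht
      set r := t ^ (s - (d:ℝ))⁻¹ with hrdef
      have hr0 : 0 < r := Real.rpow_pos_of_pos ht0 _
      have hrδ₀ : r < δ₀ := by
        have h1 : δ₀ ^ (s - (d:ℝ)) < t := lt_of_le_of_lt hTge ht
        have h2 := Real.rpow_lt_rpow_of_neg (Real.rpow_pos_of_pos hδ₀pos _) h1 hinvneg
        rwa [← Real.rpow_mul hδ₀pos.le, mul_inv_cancel₀ hsdne, Real.rpow_one] at h2
      have hsub : {x | distM x μ ≤ r/2} ⊆ {x | t < f x} ∪ {x | distM x μ = 0} := by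
        intro x hx
        rcases (distM_nonneg x μ).lt_or_eq with hdx | hdx
        · left
          simp only [mem_setOf_eq] at hx ⊢
          have hdr : distM x μ < r := lt_of_le_of_lt hx (by linarith)
          have h2 := Real.rpow_lt_rpow_of_neg hdx hdr hsd'
          rwa [hrdef, ← Real.rpow_mul ht0.le, inv_mul_cancel₀ hsdne, Real.rpow_one] at h2
        · right; exact hdx.symm
      have hm1 : ν {x | distM x μ ≤ r/2} ≤ ν {x | t < f x} := by
        calc ν {x | distM x μ ≤ r/2}
            ≤ ν ({x | t < f x} ∪ {x | distM x μ = 0}) := measure_mono hsub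
          _ ≤ ν {x | t < f x} + ν {x | distM x μ = 0} := measure_union_le _ _
          _ = ν {x | t < f x} := by rw [hν0, add_zero]
      refine le_trans (le_of_eq ?_) (le_trans (hlow (r/2) (by linarith) (by linarith)) hm1)
      congr 1
      have hhalf : (r/2) ^ ((d:ℝ) - D) = r ^ ((d:ℝ) - D) / 2 ^ ((d:ℝ) - D) :=
        Real.div_rpow hr0.le (by norm_num) _
      have hexp : (s - (d:ℝ))⁻¹ * ((d:ℝ) - D) = -(p s) := by
        rw [hpdef]
        simp only
        have h1 : (d:ℝ) - s ≠ 0 := by linarith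
        field_simp
        ring
      have h2inv : (2:ℝ) ^ (D - (d:ℝ)) = ((2:ℝ) ^ ((d:ℝ) - D))⁻¹ := by
        rw [← Real.rpow_neg (by norm_num : (0:ℝ) ≤ 2)]
        ring_nf
      rw [hKdef, hhalf, hrdef, ← Real.rpow_mul ht0.le, hexp, h2inv]
      field_simp
    have hplt : -(p s) < -1 := by linarith
    have hint2 : IntegrableOn (fun t : ℝ => K * t ^ (-(p s))) (Ioi T) :=
      (integrableOn_Ioi_rpow_of_lt hplt hTpos).const_mul K
    have hint_nn : 0 ≤ᵐ[volume.restrict (Ioi T)] fun t : ℝ => K * t ^ (-(p s)) := by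
      filter_upwards [self_mem_ae_restrict measurableSet_Ioi] with t ht
      have ht0 : 0 < t := lt_trans hTpos ht
      have : (0:ℝ) < t ^ (-(p s)) := Real.rpow_pos_of_pos ht0 _
      positivity
    have heq2 : ∫⁻ t in Ioi T, ENNReal.ofReal (K * t ^ (-(p s)))
        = ENNReal.ofReal (∫ t in Ioi T, K * t ^ (-(p s))) :=
      (ofReal_integral_eq_lintegral_ofReal hint2 hint_nn).symm
    have heval : ∫ t in Ioi T, K * t ^ (-(p s)) = K * (T ^ (1 - p s) / (p s - 1)) := by
      rw [MeasureTheory.integral_const_mul, integral_Ioi_rpow_of_lt hplt hTpos]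
      congr 1
      rw [show -(p s) + 1 = -(p s - 1) by ring, div_neg, neg_div, neg_neg,
        show -(p s - 1) = 1 - p s by ring]
    have hIlb : ENNReal.ofReal (K * (T ^ (1 - p s) / (p s - 1)))
        ≤ ∫⁻ x, ENNReal.ofReal (f x) ∂ν := by
      calc ENNReal.ofReal (K * (T ^ (1 - p s) / (p s - 1)))
          = ∫⁻ t in Ioi T, ENNReal.ofReal (K * t ^ (-(p s))) := by rw [heq2, heval]
        _ ≤ ∫⁻ t in Ioi T, ν {x | t < f x} :=
            setLIntegral_mono' measurableSet_Ioi fun t ht => hlb t ht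
        _ ≤ ∫⁻ t in Ioi (0:ℝ), ν {x | t < f x} := lintegral_mono_set (Ioi_subset_Ioi hTpos.le)
        _ = ∫⁻ x, ENNReal.ofReal (f x) ∂ν := layer.symm
    have hTp : (0:ℝ) < T ^ (1 - p s) := Real.rpow_pos_of_pos hTpos _
    calc g s = K * (T ^ (1 - p s) / (p s - 1)) := by
          rw [hgdef]; simp only; rw [mul_assoc, div_eq_mul_inv]
      _ = (ENNReal.ofReal (K * (T ^ (1 - p s) / (p s - 1)))).toReal :=
          (ENNReal.toReal_ofReal (by positivity)).symm
      _ ≤ (∫⁻ x, ENNReal.ofReal (f x) ∂ν).toReal := ENNReal.toReal_mono hfin.ne hIlb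
      _ = ∫ x, f x ∂ν := hieq.symm
  -- final limit argument
  have hgle : g ≤ᶠ[𝓝[>] D] fun s : ℝ => ∫ x, (distM x μ) ^ (s - (d:ℝ)) ∂ν := by
    filter_upwards [Ioo_mem_nhdsGT_of_mem ⟨le_refl D, hDd⟩] with s hs
    exact key s hs.1 hs.2
  refine tendsto_atTop_mono' _ hgle ?_
  have hptend : Tendsto (fun s => p s - 1) (𝓝[>] D) (𝓝[>] 0) := by
    rw [tendsto_nhdsWithin_iff]
    constructor
    · have hc1 : Tendsto (fun s : ℝ => ((d:ℝ) - D) / ((d:ℝ) - s) - 1) (𝓝 D)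
          (𝓝 (((d:ℝ) - D) / ((d:ℝ) - D) - 1)) := by
        exact Tendsto.sub_const
          (Tendsto.div tendsto_const_nhds (tendsto_const_nhds.sub tendsto_id) hd0.ne') 1
      rw [div_self hd0.ne', sub_self] at hc1
      exact hc1.mono_left nhdsWithin_le_nhds
    · filter_upwards [Ioo_mem_nhdsGT_of_mem ⟨le_refl D, hDd⟩] with s hs
      simp only [mem_Ioi, sub_pos, hpdef]
      rw [lt_div_iff₀ (by linarith [hs.2] : (0:ℝ) < (d:ℝ) - s)]
      linarith [hs.1]
  have h2 : Tendsto (fun s => (p s - 1)⁻¹) (𝓝[>] D) atTop :=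
    tendsto_inv_nhdsGT_zero.comp hptend
  have h1 : Tendsto (fun s => K * T ^ (1 - p s)) (𝓝[>] D) (𝓝 (K * 1)) := by
    have hT1 : Tendsto (fun s => 1 - p s) (𝓝[>] D) (𝓝 0) := by
      have := (hptend.mono_right nhdsWithin_le_nhds).neg
      simp only [neg_zero] at this
      convert this using 2 with s
      ring
    have hTc : Tendsto (fun y : ℝ => T ^ y) (𝓝 0) (𝓝 (T ^ (0:ℝ))) :=
      (Real.continuousAt_const_rpow hTpos.ne').tendsto
    have h3 := hTc.comp hT1
    rw [Real.rpow_zero] at h3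
    exact tendsto_const_nhds.mul h3
  have := Filter.Tendsto.pos_mul_atTop (by linarith : (0:ℝ) < K * 1) h1 h2
  exact this
end

section
/- Given a Borel probability measure μ on ℝ^d and a finite Borel measure ν, for any 0 < δ_1 < δ_2 the difference h(s) := ζ_μ(s, ν^{μ,δ_2}) − ζ_μ(s, ν^{μ,δ_1}) of the relative distance zeta functions extends to an entire function of s ∈ ℂ. -/
open MeasureTheory Filter Topology
open scoped ENNReal

/-- The `δ`-tubular-neighborhood measure of `μ` with respect to `ν`. -/
noncomputable def tubularMeasure {X : Type*} [MetricSpace X] [MeasurableSpace X]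
    (ν μ : Measure X) (δ : ℝ) : Measure X :=
  ν.restrict {x | distM x μ ≤ δ}

/-- The relative distance zeta function of `μ` with respect to `ν` in ambient
dimension `d`. -/
noncomputable def distZeta {X : Type*} [MetricSpace X] [MeasurableSpace X]
    (d : ℕ) (μ ν : Measure X) (s : ℂ) : ℂ :=
  ∫ x, ((distM x μ : ℂ)) ^ (s - d) ∂ν

section aux

variable {X : Type*} [MetricSpace X] [MeasurableSpace X] [BorelSpace X]

lemma continuous_distM (μ : Measure X) : Continuous fun x => distM x μ :=
  Metric.continuous_infDist_pt _

lemma measurable_cpow_distM (μ : Measure X) (w : ℂ) :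
    Measurable fun x => ((distM x μ : ℂ)) ^ w := by
  have hm : Measurable fun x => (distM x μ : ℂ) :=
    Complex.measurable_ofReal.comp (continuous_distM μ).measurable
  have : (fun x => ((distM x μ : ℂ)) ^ w) = fun x =>
      if (distM x μ : ℂ) = 0 then (if w = 0 then 1 else 0)
      else Complex.exp (Complex.log (distM x μ : ℂ) * w) := by
    funext x; rw [Complex.cpow_def]
  rw [this]
  exact Measurable.ite (hm (measurableSet_singleton 0)) measurable_const
    (Complex.measurable_exp.comp ((Complex.measurable_log.comp hm).mul_const w))

end aux

theorem zeta_difference_of_tubular_measures_entire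
    (d : ℕ) (μ ν : Measure (EuclideanSpace ℝ (Fin d)))
    [IsProbabilityMeasure μ] [IsFiniteMeasure ν]
    (δ₁ δ₂ : ℝ) (h1 : 0 < δ₁) (h12 : δ₁ < δ₂) :
    ∃ H : ℂ → ℂ, Differentiable ℂ H ∧
      ∀ s : ℂ, (d : ℝ) < s.re →
        H s = distZeta d μ (tubularMeasure ν μ δ₂) s
                - distZeta d μ (tubularMeasure ν μ δ₁) s := by
  classical
  set c : EuclideanSpace ℝ (Fin d) → ℝ := fun x => distM x μ with hc_def
  have hc : Continuous c := continuous_distM μ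
  set S₁ : Set (EuclideanSpace ℝ (Fin d)) := {x | c x ≤ δ₁} with hS₁def
  set S₂ : Set (EuclideanSpace ℝ (Fin d)) := {x | c x ≤ δ₂} with hS₂def
  have hS₁ : MeasurableSet S₁ := measurableSet_le hc.measurable measurable_const
  have hS₂ : MeasurableSet S₂ := measurableSet_le hc.measurable measurable_const
  set A : Set (EuclideanSpace ℝ (Fin d)) := S₂ \ S₁ with hAdef
  have hA : MeasurableSet A := hS₂.diff hS₁
  set ρ : Measure (EuclideanSpace ℝ (Fin d)) := ν.restrict A with hρdef
  have : IsFiniteMeasure ρ := by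
    rw [hρdef]; infer_instance
  -- a.e. on ρ, δ₁ < c x ≤ δ₂
  have hmemA : ∀ᵐ x ∂ρ, x ∈ A := ae_restrict_mem hA
  have hbounds : ∀ᵐ x ∂ρ, δ₁ < c x ∧ c x ≤ δ₂ := by
    filter_upwards [hmemA] with x hx
    exact ⟨not_le.mp hx.2, hx.1⟩
  set F : ℂ → EuclideanSpace ℝ (Fin d) → ℂ :=
    fun s x => ((c x : ℂ)) ^ (s - d) with hFdef
  set F' : ℂ → EuclideanSpace ℝ (Fin d) → ℂ :=
    fun s x => ((c x : ℂ)) ^ (s - d) * Complex.log (c x) with hF'def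
  have hFmeas : ∀ s : ℂ, AEStronglyMeasurable (F s) ρ := fun s =>
    (measurable_cpow_distM μ (s - d)).aestronglyMeasurable
  have hF'meas : ∀ s : ℂ, AEStronglyMeasurable (F' s) ρ := fun s =>
    ((measurable_cpow_distM μ (s - d)).mul
      (Complex.measurable_log.comp
        (Complex.measurable_ofReal.comp hc.measurable))).aestronglyMeasurable
  -- log bound constant
  set M : ℝ := max |Real.log δ₁| |Real.log δ₂| with hMdef
  have hM0 : 0 ≤ M := le_trans (abs_nonneg _) (le_max_left _ _)
  have hlogbound : ∀ x : ℝ, δ₁ ≤ x → x ≤ δ₂ → |Real.log x| ≤ M := by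
    intro x hx1 hx2
    have hL1 : Real.log δ₁ ≤ Real.log x := Real.log_le_log h1 hx1
    have h2 : Real.log x ≤ Real.log δ₂ := Real.log_le_log (h1.trans_le hx1) hx2
    rcases abs_cases (Real.log x) with ⟨he, _⟩ | ⟨he, _⟩
    · rw [he]; exact h2.trans ((le_abs_self _).trans (le_max_right _ _))
    · rw [he]; calc -Real.log x ≤ -Real.log δ₁ := by linarith
        _ ≤ |Real.log δ₁| := neg_le_abs _
        _ ≤ M := le_max_left _ _
  -- norm of F
  have hnormF : ∀ (s : ℂ) (x : ℝ), δ₁ ≤ x → x ≤ δ₂ →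
      ‖((x : ℂ)) ^ (s - d)‖ ≤ Real.exp ((‖s‖ + d) * M) := by
    intro s x hx1 hx2
    have hx0 : 0 < x := h1.trans_le hx1
    rw [Complex.norm_cpow_eq_rpow_re_of_pos hx0,
      Real.rpow_def_of_pos hx0]
    apply Real.exp_le_exp.mpr
    have h1' : |(s - (d : ℂ)).re| ≤ ‖s‖ + d := by
      rw [Complex.sub_re]
      calc |s.re - ((d : ℂ)).re| ≤ |s.re| + |((d : ℂ)).re| := abs_sub _ _
        _ ≤ ‖s‖ + d := by
            have := Complex.abs_re_le_norm s
            simp only [Complex.natCast_re, Nat.abs_cast]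
            exact add_le_add this le_rfl
    calc Real.log x * (s - (d : ℂ)).re ≤ |Real.log x * (s - (d : ℂ)).re| := le_abs_self _
      _ = |(s - (d : ℂ)).re| * |Real.log x| := by rw [abs_mul, mul_comm]
      _ ≤ (‖s‖ + d) * M := by
          apply mul_le_mul h1' (hlogbound x hx1 hx2) (abs_nonneg _)
          positivity
  -- the entire function
  set H : ℂ → ℂ := fun s => ∫ x, F s x ∂ρ with hHdef
  have hFint : ∀ s : ℂ, Integrable (F s) ρ := by
    intro s
    apply Integrable.mono' (integrable_const (Real.exp ((‖s‖ + d) * M))) (hFmeas s)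
    filter_upwards [hbounds] with x ⟨hx1, hx2⟩
    exact hnormF s (c x) hx1.le hx2
  refine ⟨H, ?_, ?_⟩
  · -- differentiability
    intro s₀
    set B : ℝ := Real.exp ((‖s₀‖ + 1 + d) * M) * M with hBdef
    have key := hasDerivAt_integral_of_dominated_loc_of_deriv_le
      (F := F) (F' := F') (x₀ := s₀) (bound := fun _ => B) (μ := ρ)
      (Metric.ball_mem_nhds s₀ zero_lt_one)
      (Eventually.of_forall fun s => hFmeas s)
      (hFint s₀) (hF'meas s₀)
      ?_ (integrable_const B) ?_
    · exact key.2.differentiableAt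
    · -- bound on F'
      filter_upwards [hbounds] with x ⟨hx1, hx2⟩
      intro s hs
      have hxs : ‖s‖ ≤ ‖s₀‖ + 1 := by
        have := mem_ball_iff_norm.mp hs
        calc ‖s‖ = ‖s₀ + (s - s₀)‖ := by ring_nf
          _ ≤ ‖s₀‖ + ‖s - s₀‖ := norm_add_le _ _
          _ ≤ ‖s₀‖ + 1 := by linarith
      have hx0 : (0:ℝ) < c x := h1.trans hx1
      have hlog : Complex.log ((c x : ℂ)) = ((Real.log (c x) : ℂ)) :=
        (Complex.ofReal_log hx0.le).symm
      rw [hF'def]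
      simp only [norm_mul]
      rw [hlog]
      have h2 : ‖((Real.log (c x) : ℂ))‖ = |Real.log (c x)| := by
        rw [Complex.norm_real, Real.norm_eq_abs]
      rw [h2]
      calc ‖((c x : ℂ)) ^ (s - d)‖ * |Real.log (c x)|
          ≤ Real.exp ((‖s‖ + d) * M) * M := by
            apply mul_le_mul (hnormF s (c x) hx1.le hx2)
              (hlogbound (c x) hx1.le hx2) (abs_nonneg _) (Real.exp_nonneg _)
        _ ≤ B := by
            rw [hBdef]
            apply mul_le_mul_of_nonneg_right _ hM0
            apply Real.exp_le_exp.mpr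
            apply mul_le_mul_of_nonneg_right _ hM0
            linarith
    · -- HasDerivAt
      filter_upwards [hbounds] with x ⟨hx1, hx2⟩
      intro s _
      have hx0 : ((c x : ℂ)) ≠ 0 := by
        simp only [ne_eq, Complex.ofReal_eq_zero]
        exact (h1.trans hx1).ne'
      have h := (Complex.hasStrictDerivAt_const_cpow (x := (c x : ℂ)) (y := s - d)
        (Or.inl hx0)).hasDerivAt.comp s ((hasDerivAt_id s).sub_const (d : ℂ))
      simpa [hFdef, F', mul_comm, mul_assoc, mul_one, Function.comp_def] using h
  · -- agreement for re s > d
    intro s hs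
    have hsd : s - (d : ℂ) ≠ 0 := by
      intro h
      rw [sub_eq_zero] at h
      rw [h] at hs
      simp at hs
    have hre : 0 < (s - (d : ℂ)).re := by
      rw [Complex.sub_re, Complex.natCast_re]; linarith
    -- integrability on S₂
    have hint2 : IntegrableOn (F s) S₂ ν := by
      apply Integrable.mono' (integrable_const (δ₂ ^ ((s - (d:ℂ)).re)))
        (measurable_cpow_distM μ (s - d)).aestronglyMeasurable
      filter_upwards [ae_restrict_mem hS₂] with x hx
      rcases eq_or_lt_of_le (Metric.infDist_nonneg : (0:ℝ) ≤ c x) with he | hlt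
      · have hd0 : distM x μ = 0 := he.symm
        show ‖((distM x μ : ℂ)) ^ (s - d)‖ ≤ _
        rw [hd0, Complex.ofReal_zero, Complex.zero_cpow hsd]
        simp only [norm_zero]
        exact Real.rpow_nonneg (by linarith) _
      · have hlt' : (0:ℝ) < distM x μ := hlt
        show ‖((distM x μ : ℂ)) ^ (s - d)‖ ≤ _
        rw [Complex.norm_cpow_eq_rpow_re_of_pos hlt']
        exact Real.rpow_le_rpow hlt'.le hx hre.le
    have hint1 : IntegrableOn (F s) S₁ ν :=
      hint2.mono_set (fun x hx => le_trans hx h12.le)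
    have hdiff := integral_diff (μ := ν) (f := F s) hS₁ hint2
      (fun x hx => le_trans hx h12.le)
    have e2 : distZeta d μ (tubularMeasure ν μ δ₂) s = ∫ x in S₂, F s x ∂ν := rfl
    have e1 : distZeta d μ (tubularMeasure ν μ δ₁) s = ∫ x in S₁, F s x ∂ν := rfl
    rw [e1, e2, hHdef]
    simpa [hρdef, hAdef] using hdiff
end

section
/- If each μ_i is relatively Minkowski nondegenerate with respect to ν_i and the sup-norm Minkowski contents M_∞^{D_i}(μ_i, ν_i) exist (where D_i = dim_B(μ_i, ν_i)), then the sup-norm Minkowski content of the product exists in dimension D = Σ D_i and equals the product: M_∞^D(⊗μ_i, ⊗ν_i) = ∏_{i=1}^k M_∞^{D_i}(μ_i, ν_i). -/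
open MeasureTheory Filter Topology
open scoped ENNReal

theorem sup_norm_minkowski_content_of_product
    (k : ℕ) (d : Fin k → ℕ)
    (μ ν : ∀ i, Measure (Fin (d i) → ℝ))
    (hμ : ∀ i, IsProbabilityMeasure (μ i))
    (hν : ∀ i, IsFiniteMeasure (ν i))
    (D : Fin k → ℝ)
    (hD : ∀ i, lowerBoxDim (d i) (μ i) (ν i) = D i)
    (hD' : ∀ i, upperBoxDim (d i) (μ i) (ν i) = D i)
    (M : Fin k → ℝ≥0∞)
    (hMpos : ∀ i, 0 < M i) (hMfin : ∀ i, M i < ∞)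
    (hMlow : ∀ i, lowerContent (d i) (μ i) (ν i) (D i) = M i)
    (hMup : ∀ i, upperContent (d i) (μ i) (ν i) (D i) = M i) :
    lowerContent (∑ i, d i) (Measure.pi μ) (Measure.pi ν) (∑ i, D i) = ∏ i, M i ∧
    upperContent (∑ i, d i) (Measure.pi μ) (Measure.pi ν) (∑ i, D i) = ∏ i, M i := by
  classical
  haveI := hμ; haveI := hν
  -- each support is nonempty
  have hSne : ∀ i, (msupport (μ i)).Nonempty := by
    intro i
    by_contra hne
    rw [Set.not_nonempty_iff_eq_empty] at hne
    have h0 : μ i Set.univ = 0 := by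
      apply measure_null_of_locally_null
      intro x _
      have hx : x ∉ msupport (μ i) := by rw [hne]; exact Set.notMem_empty x
      simp only [msupport, Set.mem_setOf_eq, not_forall, not_not] at hx
      obtain ⟨U, hU, hU0⟩ := hx
      exact ⟨U, by rwa [nhdsWithin_univ], hU0⟩
    have h1 := measure_univ (μ := μ i)
    rw [h0] at h1
    exact one_ne_zero h1.symm
  -- the support of the product measure is the product of the supports
  have hsupp : msupport (Measure.pi μ) = Set.pi Set.univ (fun i => msupport (μ i)) := by
    ext x
    constructor
    · intro hx i _
      by_contra hxi
      simp only [msupport, Set.mem_setOf_eq, not_forall, not_not] at hxi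
      obtain ⟨U, hU, hU0⟩ := hxi
      have hVx : x i ∈ interior U := mem_interior_iff_mem_nhds.2 hU
      have hV0 : μ i (interior U) = 0 := measure_mono_null interior_subset hU0
      have hW : (fun y : ∀ j, Fin (d j) → ℝ => y i) ⁻¹' (interior U) ∈ nhds x :=
        (continuous_apply i).continuousAt.preimage_mem_nhds
          (isOpen_interior.mem_nhds hVx)
      apply hx _ hW
      have hWeq : (fun y : ∀ j, Fin (d j) → ℝ => y i) ⁻¹' (interior U)
          = Set.pi Set.univ
            (Function.update (fun j => (Set.univ : Set (Fin (d j) → ℝ))) i (interior U)) := by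
        rw [Set.univ_pi_update_univ]
      rw [hWeq, Measure.pi_pi]
      apply Finset.prod_eq_zero (Finset.mem_univ i)
      simp [hV0]
    · intro hx U hU
      obtain ⟨r, hr, hball⟩ := Metric.mem_nhds_iff.1 hU
      have hle : Measure.pi μ (Metric.ball x r) ≤ Measure.pi μ U := measure_mono hball
      rw [ball_pi x hr, Measure.pi_pi] at hle
      intro h0
      rw [h0, le_zero_iff, Finset.prod_eq_zero_iff] at hle
      obtain ⟨i, _, hi⟩ := hle
      exact hx i (Set.mem_univ i) _ (Metric.ball_mem_nhds _ hr) hi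
  -- tube sets factorize
  have htube : ∀ δ : ℝ, 0 < δ →
      {x : ∀ i, Fin (d i) → ℝ | distM x (Measure.pi μ) ≤ δ}
        = Set.pi Set.univ (fun i => {t | distM t (μ i) ≤ δ}) := by
    intro δ hδ
    have hPne : (Set.pi Set.univ fun i => msupport (μ i)).Nonempty := by
      choose y hy using hSne
      exact ⟨y, fun i _ => hy i⟩
    ext x
    simp only [Set.mem_setOf_eq, Set.mem_pi, Set.mem_univ, forall_true_left, distM, hsupp]
    constructor
    · intro h i
      refine le_of_forall_pos_le_add fun ε hε => ?_
      have hlt : Metric.infDist x (Set.pi Set.univ fun i => msupport (μ i)) < δ + ε :=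
        lt_of_le_of_lt h (by linarith)
      obtain ⟨y, hy, hxy⟩ := (Metric.infDist_lt_iff hPne).1 hlt
      calc Metric.infDist (x i) (msupport (μ i)) ≤ dist (x i) (y i) :=
            Metric.infDist_le_dist_of_mem (hy i (Set.mem_univ i))
        _ ≤ dist x y := dist_le_pi_dist x y i
        _ ≤ δ + ε := hxy.le
    · intro h
      refine le_of_forall_pos_le_add fun ε hε => ?_
      have hy : ∀ i, ∃ y ∈ msupport (μ i), dist (x i) y < δ + ε := fun i =>
        (Metric.infDist_lt_iff (hSne i)).1 (lt_of_le_of_lt (h i) (by linarith))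
      choose y hy1 hy2 using hy
      calc Metric.infDist x (Set.pi Set.univ fun i => msupport (μ i))
            ≤ dist x y := Metric.infDist_le_dist_of_mem (fun i _ => hy1 i)
        _ ≤ δ + ε := (dist_pi_le_iff (by linarith)).2 fun i => (hy2 i).le
  -- the one-dimensional tube functions
  set f : Fin k → ℝ → ℝ≥0∞ := fun i δ =>
    ENNReal.ofReal (δ ^ (D i - (d i : ℝ))) * ν i {t | distM t (μ i) ≤ δ} with hf
  have htendi : ∀ i, Tendsto (f i) (𝓝[>] (0 : ℝ)) (𝓝 (M i)) := fun i =>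
    tendsto_of_liminf_eq_limsup (hMlow i) (hMup i)
  have htendprod : ∀ s : Finset (Fin k),
      Tendsto (fun δ => ∏ i ∈ s, f i δ) (𝓝[>] (0 : ℝ)) (𝓝 (∏ i ∈ s, M i)) := by
    intro s
    induction s using Finset.induction_on with
    | empty => simpa using tendsto_const_nhds
    | insert j s hj ih =>
      simp only [Finset.prod_insert hj]
      exact ENNReal.Tendsto.mul (htendi j) (Or.inl (hMpos j).ne') ih (Or.inr (hMfin j).ne)
  -- the product tube function factorizes on (0, ∞)
  have hkey : ∀ δ ∈ Set.Ioi (0 : ℝ),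
      ENNReal.ofReal (δ ^ ((∑ i, D i) - ((∑ i, d i : ℕ) : ℝ))) *
        Measure.pi ν {x | distM x (Measure.pi μ) ≤ δ} = ∏ i, f i δ := by
    intro δ hδ
    rw [Set.mem_Ioi] at hδ
    rw [htube δ hδ, Measure.pi_pi]
    rw [show ((∑ i, D i) - ((∑ i, d i : ℕ) : ℝ)) = ∑ i, (D i - (d i : ℝ)) by
      push_cast
      rw [Finset.sum_sub_distrib]]
    rw [Real.rpow_sum_of_pos hδ,
      ENNReal.ofReal_prod_of_nonneg (fun i _ => Real.rpow_nonneg hδ.le _),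
      ← Finset.prod_mul_distrib]
  have htendF : Tendsto (fun δ : ℝ =>
      ENNReal.ofReal (δ ^ ((∑ i, D i) - ((∑ i, d i : ℕ) : ℝ))) *
        Measure.pi ν {x | distM x (Measure.pi μ) ≤ δ}) (𝓝[>] (0 : ℝ)) (𝓝 (∏ i, M i)) := by
    apply Tendsto.congr' _ (htendprod Finset.univ)
    filter_upwards [self_mem_nhdsWithin] with δ hδ
    exact (hkey δ hδ).symm
  exact ⟨htendF.liminf_eq, htendF.limsup_eq⟩
end
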